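/- Let H be a real Hilbert space with Hilbert basis (s_k)_{k∈ℕ}, and let T : H → H be a continuous self-adjoint linear operator with T s_k = Γ_k s_k for all k, where Γ : ℕ → ℝ is nondecreasing. Fix j ∈ ℕ, natural numbers n ≤ m with m ≥ 1, and continuous linear operators B_1, …, B_m : H → H. Assume that for every real orthogonal m×m matrix P = (p_{lt}), setting C_l := Σ_{t=1}^m p_{lt}·B_t, one has Σ_{l=1}^m (Γ_{j+l} − Γ_j)·⟨[T, C_l] s_j, C_l s_j⟩ ≥ Σ_{i=1}^n (Γ_{j+i} − Γ_j). Then Σ_{i=1}^n (Γ_{j+i} − Γ_j) ≤ Σ_{A=1}^m ‖[T, B_A] s_j‖². -/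

import Mathlib

open Matrix

open scoped RealInnerProductSpace

/-- Abstract skeleton of the proof of Theorem 2.4: if for every orthogonal
matrix `P` the rotated operators `C l = ∑ t, P l t • B t` satisfy
`∑ l, (Γ (j+l) − Γ j)·⟪[T, C l] (s j), C l (s j)⟫ ≥ ∑_{i=1}^n (Γ (j+i) − Γ j)`, then
`∑_{i=1}^n (Γ (j+i) − Γ j) ≤ ∑ A, ‖[T, B A] (s j)‖²`.
The index `l : Fin m` corresponds to `l+1 ∈ {1,…,m}` and `i : Fin n` to `i+1 ∈ {1,…,n}`. -/
theorem stmt12 {H : Type*} [NormedAddCommGroup H] [InnerProductSpace ℝ H] [CompleteSpace H]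
    (s : HilbertBasis ℕ ℝ H) (T : H →L[ℝ] H)
    (hT : ∀ x y : H, ⟪T x, y⟫ = ⟪x, T y⟫)
    (Γ : ℕ → ℝ) (hΓ : Monotone Γ) (hTs : ∀ k, T (s k) = Γ k • s k)
    (j n m : ℕ) (hnm : n ≤ m) (hm : 1 ≤ m) (B : Fin m → H →L[ℝ] H)
    (hP : ∀ P : Matrix (Fin m) (Fin m) ℝ, Pᵀ * P = 1 →
      ∑ i : Fin n, (Γ (j + (i : ℕ) + 1) - Γ j) ≤
        ∑ l : Fin m, (Γ (j + (l : ℕ) + 1) - Γ j) *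
          ⟪T ((∑ t, P l t • B t) (s j)) - (∑ t, P l t • B t) (T (s j)),
            (∑ t, P l t • B t) (s j)⟫) :
    ∑ i : Fin n, (Γ (j + (i : ℕ) + 1) - Γ j) ≤
      ∑ A : Fin m, ‖T (B A (s j)) - B A (T (s j))‖ ^ 2 := by
  classical
  have hdim : Module.finrank ℝ (EuclideanSpace ℝ (Fin m)) = Fintype.card (Fin m) := by
    simp
  set f : Fin m → EuclideanSpace ℝ (Fin m) :=
    fun t => WithLp.toLp 2 (fun A => ⟪B A (s j), s (j + (t : ℕ) + 1)⟫) with hf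
  have i3 : WellFoundedLT (Fin m) := inferInstance
  set p := @InnerProductSpace.gramSchmidtOrthonormalBasis ℝ _ _ _ _ (Fin m) _ _ i3 _ _ hdim f with hpdef
  set P : Matrix (Fin m) (Fin m) ℝ := Matrix.of fun l t => p l t with hPdef
  have horth : Pᵀ * P = 1 := by
    rw [mul_eq_one_comm]
    ext l l'
    have h2 := (orthonormal_iff_ite.mp p.orthonormal) l l'
    rw [PiLp.inner_apply] at h2
    simp only [RCLike.inner_apply, conj_trivial] at h2
    simpa [Matrix.mul_apply, Matrix.transpose_apply, Matrix.one_apply, hPdef, mul_comm] using h2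
  have hPtP : ∀ t t' : Fin m, ∑ l, P l t * P l t' = if t = t' then (1:ℝ) else 0 := by
    intro t t'
    have := congrArg (fun M : Matrix (Fin m) (Fin m) ℝ => M t t') horth
    simpa [Matrix.mul_apply, Matrix.transpose_apply, Matrix.one_apply] using this
  -- the coefficient identity
  have hcoef : ∀ (x : H) (k : ℕ), ⟪T x - Γ j • x, s k⟫ = (Γ k - Γ j) * ⟪x, s k⟫ := by
    intro x k
    rw [inner_sub_left, real_inner_smul_left, hT, hTs, real_inner_smul_right]
    ring
  -- the vanishing of coefficients of the rotated vectors
  have hvan : ∀ l t : Fin m, t < l →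
      ⟪(∑ t', P l t' • B t') (s j), s (j + (t : ℕ) + 1)⟫ = 0 := by
    intro l t hlt
    have htri := @InnerProductSpace.gramSchmidtOrthonormalBasis_inv_triangular ℝ _ _ _ _ (Fin m) _ _ i3 _ _ hdim f _ _ hlt
    rw [PiLp.inner_apply] at htri
    simp only [RCLike.inner_apply, conj_trivial] at htri
    have : (∑ t', P l t' • B t') (s j) = ∑ A, P l A • (B A (s j)) := by
      simp [ContinuousLinearMap.sum_apply]
    rw [this, sum_inner]
    simp only [real_inner_smul_left]
    rw [← htri]
    refine Finset.sum_congr rfl fun A _ => ?_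
    simp [hf, hPdef, hpdef, real_inner_comm, mul_comm]
  -- the key per-vector estimate
  have key : ∀ (b : H) (l : Fin m),
      (∀ t : Fin m, t < l → ⟪b, s (j + (t : ℕ) + 1)⟫ = 0) →
      (Γ (j + (l : ℕ) + 1) - Γ j) * ⟪T b - Γ j • b, b⟫ ≤ ‖T b - Γ j • b‖ ^ 2 := by
    intro b l hvb
    set u := T b - Γ j • b with hu
    set w := Γ (j + (l : ℕ) + 1) - Γ j with hw
    have hw0 : 0 ≤ w := sub_nonneg.2 (hΓ (by omega))
    have hsum1 : Summable fun k => ⟪u, s k⟫ * ⟪s k, b⟫ := s.summable_inner_mul_inner u b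
    have hsum2 : Summable fun k => ⟪u, s k⟫ * ⟪s k, u⟫ := s.summable_inner_mul_inner u u
    have h1 : ⟪u, b⟫ = ∑' k, ⟪u, s k⟫ * ⟪s k, b⟫ := (s.tsum_inner_mul_inner u b).symm
    have h2 : ‖u‖ ^ 2 = ∑' k, ⟪u, s k⟫ * ⟪s k, u⟫ := by
      rw [s.tsum_inner_mul_inner u u, real_inner_self_eq_norm_sq]
    rw [h1, h2, ← tsum_mul_left]
    refine Summable.tsum_le_tsum ?_ (hsum1.mul_left w) hsum2
    intro k
    have hk1 : ⟪u, s k⟫ = (Γ k - Γ j) * ⟪s k, b⟫ := by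
      rw [hu, hcoef b k, real_inner_comm]
    have hk2 : ⟪s k, u⟫ = (Γ k - Γ j) * ⟪s k, b⟫ := by rw [real_inner_comm]; exact hk1
    rw [hk1, hk2]
    set c := ⟪s k, b⟫ with hc
    set d := Γ k - Γ j with hd
    rcases le_or_gt k j with hkj | hjk
    · have hdneg : d ≤ 0 := sub_nonpos.2 (hΓ hkj)
      have h3 : w * d ≤ 0 := mul_nonpos_of_nonneg_of_nonpos hw0 hdneg
      nlinarith [sq_nonneg c, sq_nonneg (d * c)]
    · rcases le_or_gt (j + (l : ℕ) + 1) k with hk2 | hk2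
      · have hwd : w ≤ d := sub_le_sub_right (hΓ hk2) _
        nlinarith [mul_nonneg (mul_nonneg (sub_nonneg.2 hwd) (hw0.trans hwd)) (sq_nonneg c)]
      · -- j < k < j + l + 1 : coefficient vanishes
        have htlt : k - j - 1 < (l : ℕ) := by omega
        have htm : k - j - 1 < m := lt_trans htlt l.isLt
        have hzero := hvb ⟨k - j - 1, htm⟩ (by exact htlt)
        have hkeq : j + ((⟨k - j - 1, htm⟩ : Fin m) : ℕ) + 1 = k := by
          simp only []
          omega
        rw [hkeq] at hzero
        have hc0 : c = 0 := by rw [hc, real_inner_comm]; exact hzero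
        rw [hc0]
        ring_nf
        exact le_refl _
  -- rotation invariance of the sum of squared norms
  set dv : Fin m → H := fun t => T (B t (s j)) - B t (T (s j)) with hdv
  have hnorm : ∑ l : Fin m, ‖∑ t, P l t • dv t‖ ^ 2 = ∑ A : Fin m, ‖dv A‖ ^ 2 := by
    calc ∑ l : Fin m, ‖∑ t, P l t • dv t‖ ^ 2
        = ∑ l : Fin m, ∑ t, ∑ t', (P l t * P l t') * ⟪dv t, dv t'⟫ := by
          refine Finset.sum_congr rfl fun l _ => ?_
          rw [← real_inner_self_eq_norm_sq, sum_inner]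
          refine Finset.sum_congr rfl fun t _ => ?_
          rw [real_inner_smul_left, inner_sum, Finset.mul_sum]
          refine Finset.sum_congr rfl fun t' _ => ?_
          rw [real_inner_smul_right]; ring
      _ = ∑ t, ∑ t', (∑ l, P l t * P l t') * ⟪dv t, dv t'⟫ := by
          rw [Finset.sum_comm]
          refine Finset.sum_congr rfl fun t _ => ?_
          rw [Finset.sum_comm]
          refine Finset.sum_congr rfl fun t' _ => ?_
          rw [Finset.sum_mul]
      _ = ∑ t, ⟪dv t, dv t⟫ := by
          refine Finset.sum_congr rfl fun t _ => ?_
          simp [hPtP]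
      _ = ∑ A : Fin m, ‖dv A‖ ^ 2 := by
          simp [real_inner_self_eq_norm_sq]
  calc ∑ i : Fin n, (Γ (j + (i : ℕ) + 1) - Γ j)
      ≤ ∑ l : Fin m, (Γ (j + (l : ℕ) + 1) - Γ j) *
          ⟪T ((∑ t, P l t • B t) (s j)) - (∑ t, P l t • B t) (T (s j)),
            (∑ t, P l t • B t) (s j)⟫ := hP P horth
    _ ≤ ∑ l : Fin m, ‖∑ t, P l t • dv t‖ ^ 2 := by
        refine Finset.sum_le_sum fun l _ => ?_
        have hb : (∑ t, P l t • B t) (T (s j)) = Γ j • ((∑ t, P l t • B t) (s j)) := by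
          rw [hTs j, ContinuousLinearMap.map_smul]
        have hdiff : T ((∑ t, P l t • B t) (s j)) - (∑ t, P l t • B t) (T (s j))
            = ∑ t, P l t • dv t := by
          simp [hdv, ContinuousLinearMap.sum_apply, map_sum, smul_sub,
            Finset.sum_sub_distrib]
        rw [← hdiff, hb]
        exact key _ l (hvan l)
    _ = ∑ A : Fin m, ‖dv A‖ ^ 2 := hnorm
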